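/- Let G be a finite simple graph on n ≥ 2 vertices that is not isomorphic to the graph with two vertices and no edges. Then γ_R(G) = 2 if and only if Δ(G) = n − 1. -/
import Mathlib


open SimpleGraph

/-- The closed neighbourhood `N[v]` of a vertex `v`: `v` together with its neighbours. -/
def closedNbhd {V : Type*} (G : SimpleGraph V) (v : V) : Set V :=
  insert v (G.neighborSet v)

/-- A Roman dominating function on `G`: a map into `{0,1,2}` such that every vertex with
value `0` has a neighbour with value `2`. -/
def IsRomanDominating {V : Type*} (G : SimpleGraph V) (f : V → ℕ) : Prop :=
  (∀ v, f v ≤ 2) ∧ ∀ v, f v = 0 → ∃ u, G.Adj v u ∧ f u = 2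

/-- The Roman domination number `γ_R(G)`: the minimum weight of a Roman dominating
function on `G`. -/
noncomputable def romanNumber {V : Type*} [Fintype V] (G : SimpleGraph V) : ℕ :=
  sInf {w | ∃ f : V → ℕ, IsRomanDominating G f ∧ ∑ v, f v = w}

/-- A two-neighbour packing of `G`: a set of vertices such that every closed
neighbourhood contains at most two of its members. -/
def IsTwoNbrPacking {V : Type*} (G : SimpleGraph V) (A : Set V) : Prop :=
  ∀ v, (closedNbhd G v ∩ A).ncard ≤ 2

/-- The two-neighbour packing number `γ̄_R(G)`: the maximum size of a two-neighbour
packing of `G`. -/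
noncomputable def tnpNumber {V : Type*} [Fintype V] (G : SimpleGraph V) : ℕ :=
  sSup {n | ∃ A : Set V, IsTwoNbrPacking G A ∧ A.ncard = n}

theorem romanNumber_eq_two_iff {V : Type*} [Fintype V] (G : SimpleGraph V)
    [DecidableRel G.Adj] (hcard : 2 ≤ Fintype.card V)
    (hnotiso : ¬ Nonempty (G ≃g (⊥ : SimpleGraph (Fin 2)))) :
    romanNumber G = 2 ↔ G.maxDegree = Fintype.card V - 1 := by
  haveI : DecidableEq V := Classical.decEq V
  constructor
  · intro h2
    -- S nonempty and sInf = 2, so 2 ∈ S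
    have hS : (2 : ℕ) ∈ {w | ∃ f : V → ℕ, IsRomanDominating G f ∧ ∑ v, f v = w} := by
      have hne : {w | ∃ f : V → ℕ, IsRomanDominating G f ∧ ∑ v, f v = w}.Nonempty := by
        by_contra hne
        rw [Set.not_nonempty_iff_eq_empty] at hne
        rw [romanNumber, hne, Nat.sInf_empty] at h2
        exact (by norm_num : (0:ℕ) ≠ 2) h2
      have hmem := Nat.sInf_mem hne
      rw [romanNumber] at h2
      rwa [h2] at hmem
    obtain ⟨f, ⟨hle, hdom⟩, hsum⟩ := hS
    by_cases h2v : ∃ v, f v = 2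
    · obtain ⟨v, hv⟩ := h2v
      -- all other vertices have f = 0
      have hrest : ∀ u, u ≠ v → f u = 0 := by
        intro u hu
        have hsub : ({v, u} : Finset V) ⊆ Finset.univ := Finset.subset_univ _
        have hpair : f v + f u ≤ ∑ w, f w := by
          have := Finset.sum_le_sum_of_subset (f := f) hsub
          rwa [Finset.sum_pair (Ne.symm hu)] at this
        omega
      -- v adjacent to all others
      have hadj : ∀ u, u ≠ v → G.Adj v u := by
        intro u hu
        obtain ⟨w, hw, hw2⟩ := hdom u (hrest u hu)
        have : w = v := by
          by_contra hwv
          exact absurd (hrest w hwv) (by omega)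
        exact (this ▸ hw).symm
      have hdeg : G.degree v = Fintype.card V - 1 := by
        have : G.neighborFinset v = Finset.univ.erase v := by
          apply Finset.eq_of_subset_of_card_le
          · intro u hu
            rw [mem_neighborFinset] at hu
            exact Finset.mem_erase.2 ⟨hu.ne', Finset.mem_univ u⟩
          · apply Finset.card_le_card
            intro u hu
            rw [Finset.mem_erase] at hu
            rw [mem_neighborFinset]
            exact hadj u hu.1
        rw [degree, this, Finset.card_erase_of_mem (Finset.mem_univ v), Finset.card_univ]
      have : Nonempty V := Fintype.card_pos_iff.mp (by omega)
      refine le_antisymm ?_ (hdeg ▸ G.degree_le_maxDegree v)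
      have := maxDegree_lt_card_verts (G := G)
      omega
    · push_neg at h2v
      -- no vertex has value 2, so all values ≥ 1, so card = 2
      have hall : ∀ u, 1 ≤ f u := by
        intro u
        rcases Nat.eq_zero_or_pos (f u) with h0 | h1
        · obtain ⟨w, _, hw2⟩ := hdom u h0
          exact absurd hw2 (h2v w)
        · exact h1
      have hc2 : Fintype.card V = 2 := by
        have : Fintype.card V ≤ ∑ v, f v := by
          rw [← Finset.card_univ]
          calc (Finset.univ : Finset V).card = ∑ _x : V, 1 := by simp
          _ ≤ ∑ x, f x := Finset.sum_le_sum (fun x _ => hall x)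
        omega
      -- G must have an edge, else iso to bot on Fin 2
      have hedge : ∃ a b, G.Adj a b := by
        by_contra hne
        push_neg at hne
        apply hnotiso
        refine ⟨⟨Fintype.equivFinOfCardEq hc2, ?_⟩⟩
        intro a b
        simp only [bot_adj, false_iff]
        exact hne a b
      obtain ⟨a, b, hab⟩ := hedge
      have h1 : 1 ≤ G.degree a := by
        rw [Nat.one_le_iff_ne_zero, ← Nat.pos_iff_ne_zero, ← card_neighborFinset_eq_degree]
        exact Finset.card_pos.2 ⟨b, (mem_neighborFinset G a b).2 hab⟩
      have : Nonempty V := ⟨a⟩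
      have hlt := maxDegree_lt_card_verts (G := G)
      have hge := G.degree_le_maxDegree a
      omega
  · intro hmax
    have hnV : Nonempty V := Fintype.card_pos_iff.mp (by omega)
    obtain ⟨v, hv⟩ := G.exists_maximal_degree_vertex
    have hdeg : G.degree v = Fintype.card V - 1 := by rw [← hv, hmax]
    -- v adjacent to all others
    have hadj : ∀ u, u ≠ v → G.Adj v u := by
      intro u hu
      have heq : G.neighborFinset v = Finset.univ.erase v := by
        apply Finset.eq_of_subset_of_card_le
        · intro w hw
          rw [mem_neighborFinset] at hw
          exact Finset.mem_erase.2 ⟨hw.ne', Finset.mem_univ w⟩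
        · rw [Finset.card_erase_of_mem (Finset.mem_univ v), Finset.card_univ,
            card_neighborFinset_eq_degree, hdeg]
      rw [← mem_neighborFinset, heq]
      exact Finset.mem_erase.2 ⟨hu, Finset.mem_univ u⟩
    classical
    set f : V → ℕ := fun u => if u = v then 2 else 0 with hfdef
    have hf : IsRomanDominating G f := by
      constructor
      · intro u; simp only [hfdef]; split <;> omega
      · intro u hu
        have huv : u ≠ v := by
          intro h; rw [hfdef] at hu; simp [h] at hu
        exact ⟨v, (hadj u huv).symm, by simp [hfdef]⟩
    have hsum : ∑ u, f u = 2 := by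
      rw [hfdef]
      simp [Finset.sum_ite_eq']
    have hmem : (2 : ℕ) ∈ {w | ∃ f : V → ℕ, IsRomanDominating G f ∧ ∑ v, f v = w} :=
      ⟨f, hf, hsum⟩
    have hlb : ∀ w ∈ {w | ∃ f : V → ℕ, IsRomanDominating G f ∧ ∑ v, f v = w}, 2 ≤ w := by
      rintro w ⟨g, ⟨hgle, hgdom⟩, hgsum⟩
      by_contra hlt
      push_neg at hlt
      -- w ≤ 1, no vertex has g = 2
      have hno2 : ∀ u, g u ≠ 2 := by
        intro u hu
        have : g u ≤ ∑ x, g x := Finset.single_le_sum (fun x _ => Nat.zero_le _) (Finset.mem_univ u)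
        omega
      -- some vertex has g = 0, else sum ≥ card ≥ 2
      have hz : ∃ u, g u = 0 := by
        by_contra hz
        push_neg at hz
        have : Fintype.card V ≤ ∑ x, g x := by
          rw [← Finset.card_univ]
          calc (Finset.univ : Finset V).card = ∑ _x : V, 1 := by simp
          _ ≤ ∑ x, g x := Finset.sum_le_sum (fun x _ => Nat.one_le_iff_ne_zero.2 (hz x))
        omega
      obtain ⟨u, hu⟩ := hz
      obtain ⟨wv, _, hw2⟩ := hgdom u hu
      exact hno2 wv hw2
    rw [romanNumber]
    exact le_antisymm (Nat.sInf_le hmem) (le_csInf ⟨2, hmem⟩ hlb)
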